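/- Let K be a number field of degree d and a a nonzero fractional ideal of O_K. Suppose r₁,…,r_d is a basis of a (as a Z-module) satisfying ‖r_j‖ ≤ 2^(d/2)·√d·N(a)^(1/d)·√|Δ_K| for all j. Then for any x ∈ K, writing x = Σⱼ xⱼ rⱼ with xⱼ ∈ Q and setting x̄ = x − Σⱼ ⌊xⱼ⌉ rⱼ (rounding each coefficient to a nearest integer), one has x − x̄ ∈ a and ‖x̄‖ ≤ d^(3/2)·2^(d/2)·N(a)^(1/d)·√|Δ_K|. -/

import Mathlib

open scoped nonZeroDivisors
open NumberField FractionalIdeal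

/-- The `T₂`-norm of an element of a number field. -/
noncomputable def T2 (K : Type*) [Field K] [NumberField K] (x : K) : ℝ :=
  Real.sqrt (∑ σ : K →+* ℂ, ‖σ x‖ ^ 2)

noncomputable def embT2 (K : Type*) [Field K] [NumberField K] (x : K) :
    EuclideanSpace ℂ (K →+* ℂ) :=
  (WithLp.equiv 2 ((K →+* ℂ) → ℂ)).symm (fun σ => σ x)

lemma T2_eq_norm (K : Type*) [Field K] [NumberField K] (x : K) :
    T2 K x = ‖embT2 K x‖ := by
  rw [EuclideanSpace.norm_eq, T2]
  congr 1

lemma T2_mul_rat (K : Type*) [Field K] [NumberField K] (q : ℚ) (y : K) :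
    T2 K ((q : K) * y) = |(q : ℝ)| * T2 K y := by
  rw [T2_eq_norm, T2_eq_norm]
  have : embT2 K ((q : K) * y) = (q : ℂ) • embT2 K y := by
    ext σ
    show σ ((q : K) * y) = (q : ℂ) * σ y
    simp
  rw [this, norm_smul]
  simp

lemma embT2_sum (K : Type*) [Field K] [NumberField K] {ι : Type*} (s : Finset ι)
    (f : ι → K) : embT2 K (∑ i ∈ s, f i) = ∑ i ∈ s, embT2 K (f i) := by
  ext σ
  show σ (∑ i ∈ s, f i) = (∑ i ∈ s, embT2 K (f i)) σ
  rw [map_sum]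
  rw [show ((∑ i ∈ s, embT2 K (f i)) σ) = ∑ i ∈ s, embT2 K (f i) σ from by simp]
  rfl

theorem stmt_7 (K : Type*) [Field K] [NumberField K]
    (a : FractionalIdeal (𝓞 K)⁰ K) (ha : a ≠ 0)
    (r : Fin (Module.finrank ℚ K) → K)
    (hmem : ∀ j, r j ∈ a)
    (hbasis : Submodule.span ℤ (Set.range r) = (a : Submodule (𝓞 K) K).restrictScalars ℤ)
    (hr : ∀ j, T2 K (r j) ≤
      (2 : ℝ) ^ ((Module.finrank ℚ K : ℝ) / 2) * Real.sqrt (Module.finrank ℚ K) *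
        ((FractionalIdeal.absNorm a : ℝ) ^ ((1 : ℝ) / (Module.finrank ℚ K))) *
        Real.sqrt |(NumberField.discr K : ℝ)|)
    (x : K) (c : Fin (Module.finrank ℚ K) → ℚ)
    (hx : x = ∑ j, (c j : K) * r j) :
    x - (x - ∑ j, ((round (c j) : ℤ) : K) * r j) ∈ a ∧
      T2 K (x - ∑ j, ((round (c j) : ℤ) : K) * r j) ≤
        (Module.finrank ℚ K : ℝ) ^ ((3 : ℝ) / 2) *
          (2 : ℝ) ^ ((Module.finrank ℚ K : ℝ) / 2) *
          ((FractionalIdeal.absNorm a : ℝ) ^ ((1 : ℝ) / (Module.finrank ℚ K))) *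
          Real.sqrt |(NumberField.discr K : ℝ)| := by
  have hB : ∀ j, T2 K (r j) ≤
      (2 : ℝ) ^ ((Module.finrank ℚ K : ℝ) / 2) * Real.sqrt (Module.finrank ℚ K) *
        ((FractionalIdeal.absNorm a : ℝ) ^ ((1 : ℝ) / (Module.finrank ℚ K))) *
        Real.sqrt |(NumberField.discr K : ℝ)| := hr
  set B : ℝ := (2 : ℝ) ^ ((Module.finrank ℚ K : ℝ) / 2) * Real.sqrt (Module.finrank ℚ K) *
        ((FractionalIdeal.absNorm a : ℝ) ^ ((1 : ℝ) / (Module.finrank ℚ K))) *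
        Real.sqrt |(NumberField.discr K : ℝ)| with hBdef
  have hN : (0:ℝ) ≤ (FractionalIdeal.absNorm a : ℝ) := by
    exact_mod_cast FractionalIdeal.absNorm_nonneg a
  have hBnn : 0 ≤ B := by
    rw [hBdef]
    apply mul_nonneg (mul_nonneg (mul_nonneg ?_ (Real.sqrt_nonneg _)) ?_)
      (Real.sqrt_nonneg _)
    · exact le_of_lt (Real.rpow_pos_of_pos two_pos _)
    · exact Real.rpow_nonneg hN _
  constructor
  · rw [sub_sub_cancel]
    rw [show (∑ j, ((round (c j) : ℤ) : K) * r j)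
        = ∑ j, (round (c j) : ℤ) • r j by
      refine Finset.sum_congr rfl fun j _ => ?_
      rw [zsmul_eq_mul]]
    rw [← FractionalIdeal.mem_coe]
    exact sum_mem fun j _ => zsmul_mem (FractionalIdeal.mem_coe.mpr (hmem j)) _
  · have key : x - ∑ j, ((round (c j) : ℤ) : K) * r j
        = ∑ j, ((c j - (round (c j) : ℚ) : ℚ) : K) * r j := by
      rw [hx, ← Finset.sum_sub_distrib]
      refine Finset.sum_congr rfl fun j _ => ?_
      rw [← sub_mul]
      congr 1
      push_cast
      ring
    rw [key]
    have step1 : T2 K (∑ j, ((c j - (round (c j) : ℚ) : ℚ) : K) * r j)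
        ≤ ∑ j, T2 K (((c j - (round (c j) : ℚ) : ℚ) : K) * r j) := by
      rw [T2_eq_norm, embT2_sum]
      refine le_trans (norm_sum_le _ _) (le_of_eq ?_)
      exact Finset.sum_congr rfl fun j _ => (T2_eq_norm _ _).symm
    have step2 : ∀ j, T2 K (((c j - (round (c j) : ℚ) : ℚ) : K) * r j) ≤ 1 * B := by
      intro j
      rw [T2_mul_rat]
      refine mul_le_mul ?_ (hB j) ?_ zero_le_one
      · rw [show ((1:ℝ)) = ((1:ℚ):ℝ) by norm_num]
        rw [← Rat.cast_abs, Rat.cast_le]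
        calc |c j - (round (c j) : ℚ)| ≤ 1/2 := abs_sub_round _
          _ ≤ 1 := by norm_num
      · rw [T2]; exact Real.sqrt_nonneg _
    have hdpos : 0 < Module.finrank ℚ K := Module.finrank_pos
    have hd32 : (Module.finrank ℚ K : ℝ) * Real.sqrt (Module.finrank ℚ K)
        = (Module.finrank ℚ K : ℝ) ^ ((3:ℝ)/2) := by
      have h0 : (0:ℝ) < (Module.finrank ℚ K : ℝ) := by exact_mod_cast hdpos
      rw [Real.sqrt_eq_rpow, show ((3:ℝ)/2) = 1 + 1/2 by norm_num,
        Real.rpow_add h0, Real.rpow_one]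
    calc T2 K (∑ j, ((c j - (round (c j) : ℚ) : ℚ) : K) * r j)
        ≤ ∑ j, T2 K (((c j - (round (c j) : ℚ) : ℚ) : K) * r j) := step1
      _ ≤ ∑ _j : Fin (Module.finrank ℚ K), 1 * B :=
          Finset.sum_le_sum fun j _ => step2 j
      _ = (Module.finrank ℚ K : ℝ) * B := by
          rw [Finset.sum_const, Finset.card_univ, Fintype.card_fin, one_mul,
            nsmul_eq_mul]
      _ = (Module.finrank ℚ K : ℝ) ^ ((3:ℝ)/2) *
          (2 : ℝ) ^ ((Module.finrank ℚ K : ℝ) / 2) *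
          ((FractionalIdeal.absNorm a : ℝ) ^ ((1 : ℝ) / (Module.finrank ℚ K))) *
          Real.sqrt |(NumberField.discr K : ℝ)| := by
          rw [hBdef, ← hd32]; ring
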